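/- arXiv:2204.09509 — 6 statements merged into one kernel-verified Lean document; each statement's English description precedes it below -/
import Mathlib

section
/- Let M be a real n×n symmetric positive semidefinite matrix whose entries are all nonnegative and such that every entry of the vector M·1 (where 1 is the all-ones vector) is strictly positive. If the sparsity pattern graph of M is bipartite and connected, then rank(M) ≥ n − 1. -/
open Matrix

/-- The sparsity pattern graph of a matrix `M`: vertices `{1,…,n}`, with an edge
between `i ≠ j` whenever `M i j ≠ 0`. -/
def sparsityGraph {n : ℕ} (M : Matrix (Fin n) (Fin n) ℝ) : SimpleGraph (Fin n) :=
  SimpleGraph.fromRel (fun i j => M i j ≠ 0)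

/-- If `M` is a nonnegative positive semidefinite matrix with `M · 1 > 0`, and the
sparsity pattern graph of `M` is bipartite (2-colorable) and connected, then
`rank M ≥ n - 1`. -/
theorem rank_ge_of_bipartite_connected (n : ℕ) (M : Matrix (Fin n) (Fin n) ℝ)
    (hpsd : M.PosSemidef)
    (hnonneg : ∀ i j, 0 ≤ M i j)
    (hrowsum : ∀ i, 0 < ∑ j, M i j)
    (hbip : (sparsityGraph M).Colorable 2)
    (hconn : (sparsityGraph M).Connected) :
    n - 1 ≤ M.rank := by
  classical
  obtain ⟨C⟩ := hbip
  have hsym : ∀ i j, M j i = M i j := by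
    intro i j
    have := congrFun (congrFun hpsd.1 j) i
    simpa [Matrix.conjTranspose_apply] using this.symm
  set ε : Fin n → ℝ := fun i => if C i = 0 then 1 else -1 with hεdef
  have hε_sq : ∀ i, ε i * ε i = 1 := by
    intro i; simp only [hεdef]; split <;> norm_num
  have hε_edge : ∀ i j, i ≠ j → M i j ≠ 0 → ε i * ε j = -1 := by
    intro i j hij hM
    have hadj : (sparsityGraph M).Adj i j := by
      simp only [sparsityGraph, SimpleGraph.fromRel_adj]
      exact ⟨hij, Or.inl hM⟩
    have hC := C.valid hadj
    have h2 : ∀ a : Fin 2, a = 0 ∨ a = 1 := by decide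
    simp only [hεdef]
    rcases h2 (C i) with hi | hi <;> rcases h2 (C j) with hj | hj <;>
      simp_all
  -- key: kernel vectors, sign-flipped abs value is in kernel
  have key : ∀ x : Fin n → ℝ, M.mulVec x = 0 →
      M.mulVec (fun i => ε i * |x i|) = 0 := by
    intro x hx
    set z : Fin n → ℝ := fun i => ε i * |x i| with hzdef
    have expand : ∀ v : Fin n → ℝ,
        v ⬝ᵥ M.mulVec v = ∑ i, ∑ j, v i * (M i j * v j) := by
      intro v
      simp [dotProduct, mulVec, Finset.mul_sum]
    have hterm : ∀ i j, z i * (M i j * z j) ≤ x i * (M i j * x j) := by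
      intro i j
      by_cases hij : i = j
      · subst hij
        have h1 : z i * z i = x i * x i := by
          have := hε_sq i
          have h2 := abs_mul_abs_self (x i)
          simp only [hzdef]
          nlinarith
        have : z i * (M i i * z i) = x i * (M i i * x i) := by
          linear_combination (M i i) * h1
        exact le_of_eq this
      · by_cases hM : M i j = 0
        · simp [hM]
        · have h1 : ε i * ε j = -1 := hε_edge i j hij hM
          have h2 : z i * (M i j * z j) = -(M i j * (|x i| * |x j|)) := by
            simp only [hzdef]
            linear_combination (M i j * |x i| * |x j|) * h1
          rw [h2]
          have h3 : |x i| * |x j| = |x i * x j| := (abs_mul (x i) (x j)).symm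
          nlinarith [hnonneg i j, neg_abs_le (x i * x j), abs_nonneg (x i * x j)]
    have hQx : x ⬝ᵥ M.mulVec x = 0 := by rw [hx]; simp
    have hQz_le : z ⬝ᵥ M.mulVec z ≤ 0 := by
      rw [expand z, ← hQx, expand x]
      exact Finset.sum_le_sum fun i _ => Finset.sum_le_sum fun j _ => hterm i j
    have hQz_ge : 0 ≤ z ⬝ᵥ M.mulVec z := by
      have := hpsd.dotProduct_mulVec_nonneg z
      simpa using this
    have hQz : star z ⬝ᵥ M.mulVec z = 0 := by
      simp only [star_trivial]
      linarith
    exact (hpsd.dotProduct_mulVec_zero_iff z).mp hQz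
  -- zero propagation along edges
  have prop : ∀ x : Fin n → ℝ, M.mulVec x = 0 → ∀ i j, x i = 0 →
      (sparsityGraph M).Adj i j → x j = 0 := by
    intro x hx i j hxi hadj
    have hz := key x hx
    have hMij : M i j ≠ 0 := by
      simp only [sparsityGraph, SimpleGraph.fromRel_adj] at hadj
      rcases hadj.2 with h | h
      · exact h
      · rw [← hsym i j]; exact h
    have hij : i ≠ j := by
      simp only [sparsityGraph, SimpleGraph.fromRel_adj] at hadj
      exact hadj.1
    have hrow : ∑ k, M i k * (ε k * |x k|) = 0 := by
      have := congrFun hz i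
      simpa [mulVec, dotProduct] using this
    have hrow2 : ∑ k, ε i * (M i k * (ε k * |x k|)) = 0 := by
      rw [← Finset.mul_sum, hrow, mul_zero]
    have hnonpos : ∀ k ∈ Finset.univ, ε i * (M i k * (ε k * |x k|)) ≤ 0 := by
      intro k _
      by_cases hik : i = k
      · subst hik
        simp [hxi]
      · by_cases hM : M i k = 0
        · simp [hM]
        · have h1 : ε i * ε k = -1 := hε_edge i k hik hM
          have : ε i * (M i k * (ε k * |x k|)) = -(M i k * |x k|) := by
            linear_combination (M i k * |x k|) * h1
          rw [this]
          have := hnonneg i k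
          have := abs_nonneg (x k)
          nlinarith
    have hall : ∀ k ∈ Finset.univ, ε i * (M i k * (ε k * |x k|)) = 0 := by
      intro k hk
      have := (Finset.sum_eq_zero_iff_of_nonpos hnonpos).mp hrow2 k hk
      exact this
    have hj := hall j (Finset.mem_univ j)
    have h1 : ε i * ε j = -1 := hε_edge i j hij hMij
    have h2 : M i j * |x j| = 0 := by linear_combination (M i j * |x j|) * h1 - hj
    have := mul_eq_zero.mp h2
    rcases this with h | h
    · exact absurd h hMij
    · exact abs_eq_zero.mp h
  -- a kernel vector with one zero entry is zero
  have zero_all : ∀ x : Fin n → ℝ, M.mulVec x = 0 → (∃ i, x i = 0) → x = 0 := by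
    intro x hx ⟨i0, hi0⟩
    funext j
    have walkprop : ∀ {u v : Fin n}, (sparsityGraph M).Walk u v → x u = 0 → x v = 0 := by
      intro u v w
      induction w with
      | nil => exact id
      | cons h p ih => intro h0; exact ih (prop x hx _ _ h0 h)
    obtain ⟨w⟩ := hconn.preconnected i0 j
    exact walkprop w hi0
  -- kernel has dimension at most 1
  have hk1 : Module.finrank ℝ (LinearMap.ker M.mulVecLin) ≤ 1 := by
    by_cases hker : LinearMap.ker M.mulVecLin = ⊥
    · rw [hker]
      simp
    · obtain ⟨v, hvmem, hvne⟩ := Submodule.exists_mem_ne_zero_of_ne_bot hker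
      have hle : LinearMap.ker M.mulVecLin ≤ Submodule.span ℝ {v} := by
        intro x hx
        have hxker : M.mulVec x = 0 := by
          rwa [LinearMap.mem_ker, mulVecLin_apply] at hx
        have hvker : M.mulVec v = 0 := by
          rwa [LinearMap.mem_ker, mulVecLin_apply] at hvmem
        obtain ⟨i0, hi0⟩ : ∃ i, v i ≠ 0 := by
          by_contra h
          push_neg at h
          exact hvne (funext h)
        set c := x i0 / v i0 with hc
        have hsub : M.mulVec (x - c • v) = 0 := by
          rw [mulVec_sub, hxker, Matrix.mulVec_smul, hvker, smul_zero, sub_zero]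
        have hzero : (x - c • v) i0 = 0 := by
          simp only [Pi.sub_apply, Pi.smul_apply, smul_eq_mul, hc]
          field_simp
          ring
        have := zero_all (x - c • v) hsub ⟨i0, hzero⟩
        have hxcv : x = c • v := by
          have := sub_eq_zero.mp this
          exact this
        rw [hxcv]
        exact Submodule.smul_mem _ c (Submodule.mem_span_singleton_self v)
      calc Module.finrank ℝ (LinearMap.ker M.mulVecLin)
          ≤ Module.finrank ℝ (Submodule.span ℝ ({v} : Set (Fin n → ℝ))) :=
            Submodule.finrank_mono hle
        _ = 1 := finrank_span_singleton hvne
  -- rank-nullity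
  have hrn := LinearMap.finrank_range_add_finrank_ker M.mulVecLin
  rw [Module.finrank_fintype_fun_eq_card, Fintype.card_fin] at hrn
  have hrank : M.rank = Module.finrank ℝ (LinearMap.range M.mulVecLin) := rfl
  omega
end

section
/- Consider a QCQP in which all off-diagonal entries of every matrix Q^0, Q^1, …, Q^m are nonpositive (a nonpositive off-diagonal QCQP). Suppose that: (i) the sets of optimal solutions of (P) and (D) are nonempty; (ii) the feasible set of (P) is bounded or the set of optimal solutions of (D) is bounded; (iii) the aggregated sparsity pattern graph G(V,E) of Q^0,…,Q^m is connected; and (iv) Q^0_{ij} < 0 for all edges {i,j} ∈ E. Then the SDP relaxation is exact: the optimal value of (P) equals the optimal value of the QCQP, i.e., equals the infimum of xᵀQ^0x over all x ∈ R^n satisfying xᵀQ^px ≤ b_p for p = 1,…,m. -/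
open Matrix


lemma psd_diag_nonneg {n : ℕ} {X : Matrix (Fin n) (Fin n) ℝ} (hX : X.PosSemidef) (i : Fin n) :
    0 ≤ X i i := by
  have := hX.dotProduct_mulVec_nonneg (Pi.single i 1)
  simpa [dotProduct, mulVec, Pi.single_apply] using this

lemma psd_symm_apply {n : ℕ} {X : Matrix (Fin n) (Fin n) ℝ} (hX : X.PosSemidef) (i j : Fin n) :
    X j i = X i j := by
  have := congrFun (congrFun hX.1 j) i
  simpa [conjTranspose_apply] using this.symm

lemma psd_sq_le {n : ℕ} {X : Matrix (Fin n) (Fin n) ℝ} (hX : X.PosSemidef) (i j : Fin n) :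
    X i j ^ 2 ≤ X i i * X j j := by
  rcases eq_or_ne i j with rfl | hij
  · simp [sq]
  · have key : ∀ t : ℝ, 0 ≤ X i i * (t * t) + (2 * X i j) * t + X j j := by
      intro t
      have := hX.dotProduct_mulVec_nonneg (fun k => t * (if k = i then (1:ℝ) else 0) + (if k = j then 1 else 0))
      have hsym := psd_symm_apply hX i j
      simp only [dotProduct, mulVec, star_trivial] at this
      calc (0:ℝ) ≤ _ := this
        _ = X i i * (t * t) + (2 * X i j) * t + X j j := by
          rw [show (∑ x : Fin n, ((t * if x = i then (1:ℝ) else 0) + if x = j then 1 else 0) *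
              ∑ x_1 : Fin n, X x x_1 * ((t * if x_1 = i then 1 else 0) + if x_1 = j then 1 else 0))
              = ∑ x : Fin n, ((t * if x = i then (1:ℝ) else 0) + if x = j then 1 else 0) *
              (X x i * t + X x j) from Finset.sum_congr rfl fun x _ => by
                congr 1
                simp [mul_add, mul_ite, Finset.sum_add_distrib, mul_comm, mul_assoc]]
          simp only [add_mul, mul_add, Finset.sum_add_distrib, ite_mul, one_mul, zero_mul,
            mul_ite, mul_one, mul_zero, Finset.sum_ite_eq', Finset.mem_univ, if_true]
          rw [hsym]
          ring
    have hd := discrim_le_zero key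
    rw [discrim] at hd
    nlinarith [hd]

lemma trace_mul_sum {n : ℕ} (Q X : Matrix (Fin n) (Fin n) ℝ) :
    (Q * X).trace = ∑ i, ∑ j, Q i j * X j i := by
  simp [Matrix.trace, Matrix.mul_apply, Matrix.diag]

lemma quad_sum {n : ℕ} (Q : Matrix (Fin n) (Fin n) ℝ) (x : Fin n → ℝ) :
    x ⬝ᵥ Q *ᵥ x = ∑ i, ∑ j, x i * (Q i j * x j) := by
  simp [dotProduct, mulVec, Finset.mul_sum]

/-- The key inequality: for `x i = √(X i i)`, the quadratic form is at most the trace. -/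
lemma quad_le_trace {n : ℕ} {Q X : Matrix (Fin n) (Fin n) ℝ} (hX : X.PosSemidef)
    (hQ : ∀ i j, i ≠ j → Q i j ≤ 0) :
    (fun i => Real.sqrt (X i i)) ⬝ᵥ Q *ᵥ (fun i => Real.sqrt (X i i)) ≤ (Q * X).trace := by
  rw [quad_sum, trace_mul_sum]
  refine Finset.sum_le_sum fun i _ => Finset.sum_le_sum fun j _ => ?_
  rcases eq_or_ne i j with rfl | hij
  · have : Real.sqrt (X i i) * (Q i i * Real.sqrt (X i i))
        = Q i i * (Real.sqrt (X i i) * Real.sqrt (X i i)) := by ring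
    rw [this, Real.mul_self_sqrt (psd_diag_nonneg hX i)]
  · have hle : X j i ≤ Real.sqrt (X i i) * Real.sqrt (X j j) := by
      rw [← Real.sqrt_mul (psd_diag_nonneg hX i)]
      calc X j i ≤ |X j i| := le_abs_self _
        _ = Real.sqrt ((X j i) ^ 2) := (Real.sqrt_sq_eq_abs _).symm
        _ ≤ Real.sqrt (X i i * X j j) := by
            apply Real.sqrt_le_sqrt
            have := psd_sq_le hX j i
            linarith [this, (mul_comm (X j j) (X i i)) ▸ this]
    have hq := hQ i j hij
    calc Real.sqrt (X i i) * (Q i j * Real.sqrt (X j j))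
        = Q i j * (Real.sqrt (X i i) * Real.sqrt (X j j)) := by ring
      _ ≤ Q i j * X j i := mul_le_mul_of_nonpos_left hle hq

lemma outer_posSemidef {n : ℕ} (z : Fin n → ℝ) : (vecMulVec z z).PosSemidef := by
  rw [posSemidef_iff_dotProduct_mulVec]
  constructor
  · ext i j
    simp [vecMulVec_apply, conjTranspose_apply, mul_comm]
  · intro v
    have : (vecMulVec z z) *ᵥ v = fun i => z i * (z ⬝ᵥ v) := by
      ext i
      simp [vecMulVec_apply, mulVec, dotProduct, Finset.mul_sum, mul_assoc]
    rw [this]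
    have : star v ⬝ᵥ (fun i => z i * (z ⬝ᵥ v)) = (z ⬝ᵥ v) * (z ⬝ᵥ v) := by
      simp [dotProduct, Finset.sum_mul]
      congr 1
      ext i
      ring
    rw [this]
    exact mul_self_nonneg _

lemma trace_outer {n : ℕ} (Q : Matrix (Fin n) (Fin n) ℝ) (z : Fin n → ℝ) :
    (Q * vecMulVec z z).trace = z ⬝ᵥ Q *ᵥ z := by
  rw [trace_mul_sum, quad_sum]
  refine Finset.sum_congr rfl fun i _ => Finset.sum_congr rfl fun j _ => ?_
  simp [vecMulVec_apply]
  ring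

theorem sdp_exact_main {n m : ℕ}
    (Q0 : Matrix (Fin n) (Fin n) ℝ) (Q : Fin m → Matrix (Fin n) (Fin n) ℝ) (b : Fin m → ℝ)
    (hQ0offdiag : ∀ i j, i ≠ j → Q0 i j ≤ 0)
    (hQoffdiag : ∀ p, ∀ i j, i ≠ j → Q p i j ≤ 0)
    (X : Matrix (Fin n) (Fin n) ℝ)
    (hX : (X.PosSemidef ∧ ∀ p, (Q p * X).trace ≤ b p) ∧
      ∀ X', (X'.PosSemidef ∧ ∀ p, (Q p * X').trace ≤ b p) → (Q0 * X).trace ≤ (Q0 * X').trace) :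
    (Q0 * X).trace =
      sInf {v : ℝ | ∃ x : Fin n → ℝ,
        (∀ p, x ⬝ᵥ (Q p).mulVec x ≤ b p) ∧ v = x ⬝ᵥ Q0.mulVec x} := by
  set S := {v : ℝ | ∃ x : Fin n → ℝ,
      (∀ p, x ⬝ᵥ (Q p).mulVec x ≤ b p) ∧ v = x ⬝ᵥ Q0.mulVec x} with hS
  set x : Fin n → ℝ := fun i => Real.sqrt (X i i) with hx
  have hxfeas : ∀ p, x ⬝ᵥ (Q p) *ᵥ x ≤ b p := fun p =>
    (quad_le_trace hX.1.1 (hQoffdiag p)).trans (hX.1.2 p)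
  have hmem : x ⬝ᵥ Q0 *ᵥ x ∈ S := ⟨x, hxfeas, rfl⟩
  have hlb : ∀ w ∈ S, (Q0 * X).trace ≤ w := by
    rintro w ⟨z, hz, rfl⟩
    have feas' : (vecMulVec z z).PosSemidef ∧ ∀ p, (Q p * vecMulVec z z).trace ≤ b p :=
      ⟨outer_posSemidef z, fun p => by rw [trace_outer]; exact hz p⟩
    have := hX.2 _ feas'
    rwa [trace_outer] at this
  refine le_antisymm (le_csInf ⟨_, hmem⟩ hlb) ?_
  exact (csInf_le ⟨_, hlb⟩ hmem).trans (quad_le_trace hX.1.1 hQ0offdiag)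

/-- `X` is feasible for the primal SDP (P). -/
def PrimalFeasible {n m : ℕ} (Q : Fin m → Matrix (Fin n) (Fin n) ℝ) (b : Fin m → ℝ)
    (X : Matrix (Fin n) (Fin n) ℝ) : Prop :=
  X.PosSemidef ∧ ∀ p, (Q p * X).trace ≤ b p

/-- `y` is feasible for the dual SDP (D). -/
def DualFeasible {n m : ℕ} (Q0 : Matrix (Fin n) (Fin n) ℝ)
    (Q : Fin m → Matrix (Fin n) (Fin n) ℝ) (y : Fin m → ℝ) : Prop :=
  (∀ p, 0 ≤ y p) ∧ (Q0 + ∑ p, y p • Q p).PosSemidef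

/-- `X` is an optimal solution of the primal SDP (P). -/
def PrimalOptimal {n m : ℕ} (Q0 : Matrix (Fin n) (Fin n) ℝ)
    (Q : Fin m → Matrix (Fin n) (Fin n) ℝ) (b : Fin m → ℝ)
    (X : Matrix (Fin n) (Fin n) ℝ) : Prop :=
  PrimalFeasible Q b X ∧ ∀ X', PrimalFeasible Q b X' → (Q0 * X).trace ≤ (Q0 * X').trace

/-- `y` is an optimal solution of the dual SDP (D). -/
def DualOptimal {n m : ℕ} (Q0 : Matrix (Fin n) (Fin n) ℝ)
    (Q : Fin m → Matrix (Fin n) (Fin n) ℝ) (b : Fin m → ℝ) (y : Fin m → ℝ) : Prop :=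
  DualFeasible Q0 Q y ∧ ∀ y', DualFeasible Q0 Q y' → -(b ⬝ᵥ y') ≤ -(b ⬝ᵥ y)

/-- The aggregated sparsity pattern graph of `Q^0, Q^1, …, Q^m`. -/
def aggSparsityGraph {n m : ℕ} (Q0 : Matrix (Fin n) (Fin n) ℝ)
    (Q : Fin m → Matrix (Fin n) (Fin n) ℝ) : SimpleGraph (Fin n) :=
  SimpleGraph.fromRel (fun i j => Q0 i j ≠ 0 ∨ ∃ p, Q p i j ≠ 0)

/-- For a nonpositive off-diagonal QCQP with a connected aggregated sparsity
pattern graph and `Q^0` strictly negative on every edge, the SDP relaxation is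
exact: the optimal value of (P) equals the infimum of the QCQP. -/
theorem sdp_exact_of_nonpos_offdiag (n m : ℕ) (hn : 0 < n) (hm : 0 < m)
    (Q0 : Matrix (Fin n) (Fin n) ℝ) (Q : Fin m → Matrix (Fin n) (Fin n) ℝ) (b : Fin m → ℝ)
    (hQ0 : Q0.IsSymm) (hQ : ∀ p, (Q p).IsSymm)
    (hQ0offdiag : ∀ i j, i ≠ j → Q0 i j ≤ 0)
    (hQoffdiag : ∀ p, ∀ i j, i ≠ j → Q p i j ≤ 0)
    (hP : ∃ X, PrimalOptimal Q0 Q b X)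
    (hD : ∃ y, DualOptimal Q0 Q b y)
    (hbdd : (∃ C : ℝ, ∀ X, PrimalFeasible Q b X → ∀ i j, |X i j| ≤ C) ∨
            (∃ C : ℝ, ∀ y, DualOptimal Q0 Q b y → ∀ p, |y p| ≤ C))
    (hconn : (aggSparsityGraph Q0 Q).Connected)
    (hQ0neg : ∀ i j, (aggSparsityGraph Q0 Q).Adj i j → Q0 i j < 0) :
    ∀ X, PrimalOptimal Q0 Q b X →
      (Q0 * X).trace =
        sInf {v : ℝ | ∃ x : Fin n → ℝ,
          (∀ p, x ⬝ᵥ (Q p).mulVec x ≤ b p) ∧ v = x ⬝ᵥ Q0.mulVec x} := by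
  intro X hX
  exact sdp_exact_main Q0 Q b hQ0offdiag hQoffdiag X hX
end

section
/- Let G be a simple graph on vertex set {1,…,n} equipped with a sign σ_{ij} ∈ {+1,−1} on each edge {i,j}. Define the simple graph Ḡ on vertex set {1,…,2n} whose edges are: {i,j} for every edge {i,j} of G with σ_{ij} = +1; {i, j+n} and {j, i+n} for every edge {i,j} of G with σ_{ij} = −1; and {i, i+n} for every i ∈ {1,…,n}. If every simple cycle C of G satisfies that the number of edges of C with sign −1 is congruent to the length |C| of C modulo 2, then Ḡ contains no odd cycle, i.e., Ḡ is bipartite. -/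
open SimpleGraph Walk

variable {V : Type*} {G : SimpleGraph V}

/-- weight of an edge: 1 for non-negative sign, 0 for negative sign -/
noncomputable def ew {n : ℕ} (σ : Fin n → Fin n → ℤ) (hσ : ∀ i j, σ i j = σ j i)
    (e : Sym2 (Fin n)) : ZMod 2 :=
  if Sym2.lift ⟨σ, hσ⟩ e = -1 then 0 else 1

/-- weight of a walk -/
noncomputable def Wt {n : ℕ} (σ : Fin n → Fin n → ℤ) (hσ : ∀ i j, σ i j = σ j i)
    {a b : Fin n} {G : SimpleGraph (Fin n)} (p : G.Walk a b) : ZMod 2 :=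
  (p.edges.map (ew σ hσ)).sum

lemma list_sum_map_ew {n : ℕ} (σ : Fin n → Fin n → ℤ) (hσ : ∀ i j, σ i j = σ j i)
    (l : List (Sym2 (Fin n))) :
    (l.map (ew σ hσ)).sum
      = (l.length : ZMod 2) + (l.countP fun e => decide (Sym2.lift ⟨σ, hσ⟩ e = -1)) := by
  induction l with
  | nil => simp
  | cons e l ih =>
    rw [List.map_cons, List.sum_cons, ih, List.countP_cons, List.length_cons]
    by_cases h : Sym2.lift ⟨σ, hσ⟩ e = -1
    · have h1 : ew σ hσ e = 0 := if_pos h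
      have h2 : decide (Sym2.lift ⟨σ, hσ⟩ e = -1) = true := decide_eq_true h
      rw [h1, h2, if_pos rfl, zero_add]
      push_cast
      have h3 : (1 : ZMod 2) + 1 = 0 := by decide
      linear_combination -h3
    · have h1 : ew σ hσ e = 1 := if_neg h
      have h2 : decide (Sym2.lift ⟨σ, hσ⟩ e = -1) = false := decide_eq_false h
      rw [h1, h2, if_neg (by simp), add_zero]
      push_cast
      ring

lemma walk_split_edge {a b : V} (p : G.Walk a b) (e : Sym2 V) (he : e ∈ p.edges) :
    ∃ (x y : V) (hxy : G.Adj x y) (q1 : G.Walk a x) (q2 : G.Walk y b),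
      p = q1.append (Walk.cons hxy q2) ∧ e = s(x, y) := by
  induction p with
  | nil => simp at he
  | @cons a c b h p ih =>
    rw [edges_cons, List.mem_cons] at he
    rcases he with he | he
    · exact ⟨a, c, h, Walk.nil, p, by simp, he⟩
    · obtain ⟨x, y, hxy, q1, q2, rfl, hee⟩ := ih he
      exact ⟨x, y, hxy, Walk.cons h q1, q2, by simp, hee⟩

lemma Wt_append {n : ℕ} (σ : Fin n → Fin n → ℤ) (hσ : ∀ i j, σ i j = σ j i)
    {G : SimpleGraph (Fin n)} {a b c : Fin n} (p : G.Walk a b) (q : G.Walk b c) :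
    Wt σ hσ (p.append q) = Wt σ hσ p + Wt σ hσ q := by
  simp [Wt, Walk.edges_append]

lemma Wt_cons {n : ℕ} (σ : Fin n → Fin n → ℤ) (hσ : ∀ i j, σ i j = σ j i)
    {G : SimpleGraph (Fin n)} {a b c : Fin n} (h : G.Adj a b) (p : G.Walk b c) :
    Wt σ hσ (Walk.cons h p) = ew σ hσ s(a, b) + Wt σ hσ p := by
  simp [Wt, Walk.edges_cons]

lemma Wt_cycle {n : ℕ} (σ : Fin n → Fin n → ℤ) (hσ : ∀ i j, σ i j = σ j i)
    {G : SimpleGraph (Fin n)} {u : Fin n} (w : G.Walk u u)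
    (hc : (w.edges.countP fun e => decide (Sym2.lift ⟨σ, hσ⟩ e = -1)) % 2 = w.length % 2) :
    Wt σ hσ w = 0 := by
  rw [Wt, list_sum_map_ew]
  have h1 : ((w.edges.countP fun e => decide (Sym2.lift ⟨σ, hσ⟩ e = -1) : ℕ) : ZMod 2)
      = ((w.length : ℕ) : ZMod 2) := by
    rw [← ZMod.natCast_mod _ 2, hc, ZMod.natCast_mod]
  rw [Walk.length_edges, h1, ← two_mul, show (2 : ZMod 2) = 0 by decide, zero_mul]

lemma Wt_closed {n : ℕ} {G : SimpleGraph (Fin n)} (σ : Fin n → Fin n → ℤ)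
    (hσ : ∀ i j, σ i j = σ j i)
    (hcycles : ∀ (u : Fin n) (w : G.Walk u u), w.IsCycle →
      (w.edges.countP fun e => decide (Sym2.lift ⟨σ, hσ⟩ e = -1)) % 2 = w.length % 2) :
    ∀ (k : ℕ) (u : Fin n) (w : G.Walk u u), w.length = k → Wt σ hσ w = 0 := by
  intro k
  induction k using Nat.strong_induction_on with
  | _ k IH =>
  intro u w hw
  cases w with
  | nil => simp [Wt]
  | @cons _ v _ h p =>
    rw [Walk.length_cons] at hw
    by_cases he : s(u, v) ∈ p.edges
    · obtain ⟨x, y, hxy, q1, q2, hp, hee⟩ := walk_split_edge p _ he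
      subst hp
      rw [Walk.length_append, Walk.length_cons] at hw
      rcases Sym2.eq_iff.mp hee with ⟨rfl, rfl⟩ | ⟨rfl, rfl⟩
      · -- x = u, y = v
        have h1 : Wt σ hσ (Walk.cons h q1) = 0 :=
          IH (q1.length + 1) (by omega) u (Walk.cons h q1) (by simp)
        have h2 : Wt σ hσ (Walk.cons hxy q2) = 0 :=
          IH (q2.length + 1) (by omega) u (Walk.cons hxy q2) (by simp)
        rw [Wt_cons, Wt_append, Wt_cons]
        rw [Wt_cons] at h1 h2
        calc ew σ hσ s(u, v) + (Wt σ hσ q1 + (ew σ hσ s(u, v) + Wt σ hσ q2))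
            = (ew σ hσ s(u, v) + Wt σ hσ q1) + (ew σ hσ s(u, v) + Wt σ hσ q2) := by ring
          _ = 0 := by rw [h1, h2, add_zero]
      · -- x = v, y = u
        have h1 : Wt σ hσ q1 = 0 := IH q1.length (by omega) _ q1 rfl
        have h2 : Wt σ hσ q2 = 0 := IH q2.length (by omega) _ q2 rfl
        rw [Wt_cons, Wt_append, Wt_cons, h1, h2, add_zero, zero_add,
          show s(v, u) = s(u, v) from Sym2.eq_swap, ← two_mul,
          show (2 : ZMod 2) = 0 by decide, zero_mul]
    · by_cases hnd : p.support.Nodup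
      · exact Wt_cycle σ hσ _ (hcycles u (Walk.cons h p)
          ((Walk.cons_isCycle_iff p h).mpr ⟨(Walk.isPath_def p).mpr hnd, he⟩))
      · -- find a duplicated vertex and rotate
        rw [List.nodup_iff_count_le_one] at hnd
        push_neg at hnd
        obtain ⟨x, hx⟩ := hnd
        have hx2 : 2 ≤ p.support.count x := hx
        have hxp : x ∈ p.support := List.count_pos_iff.mp (by omega)
        have hxw : x ∈ (Walk.cons h p).support := by
          rw [Walk.support_cons]; exact List.mem_cons_of_mem _ hxp
        set w' := (Walk.cons h p).rotate x hxw with hw'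
        have hWt : Wt σ hσ w' = Wt σ hσ (Walk.cons h p) := by
          rw [Wt, Wt]
          exact (((Walk.rotate_edges _ x hxw).perm).map _).sum_eq
        have hlen : w'.length = k := by
          have h1 := ((Walk.rotate_edges (Walk.cons h p) x hxw).perm).length_eq
          rw [Walk.length_edges, Walk.length_edges] at h1
          rw [h1, Walk.length_cons, hw]
        have hcount : 2 ≤ w'.support.tail.count x := by
          have h1 := ((Walk.support_rotate (Walk.cons h p) x hxw).perm).count_eq x
          rw [h1, Walk.support_cons, List.tail_cons]
          exact hx2
        rw [← hWt]
        clear_value w'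
        cases w' with
        | nil => simp at hlen; omega
        | @cons _ v2 _ h2 p2 =>
          rw [Walk.support_cons, List.tail_cons] at hcount
          rw [Walk.length_cons] at hlen
          have hxp2 : x ∈ p2.support := List.count_pos_iff.mp (by omega)
          have hspec := p2.take_spec hxp2
          have hrlen : (p2.dropUntil x hxp2).length ≠ 0 := by
            intro h0
            have hnil : p2.dropUntil x hxp2 = Walk.nil := by
              have := (Walk.nil_iff_length_eq).mpr h0
              cases hd : p2.dropUntil x hxp2 with
              | nil => rfl
              | cons _ _ => rw [hd] at h0; simp [Walk.length_cons] at h0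
            rw [hnil, Walk.append_nil] at hspec
            have := p2.count_support_takeUntil_eq_one hxp2
            rw [hspec] at this
            omega
          have hlensum := congrArg Walk.length hspec
          rw [Walk.length_append] at hlensum
          have h1 : Wt σ hσ (Walk.cons h2 (p2.takeUntil x hxp2)) = 0 :=
            IH ((p2.takeUntil x hxp2).length + 1) (by omega) x _ (by simp)
          have h2' : Wt σ hσ (p2.dropUntil x hxp2) = 0 :=
            IH ((p2.dropUntil x hxp2).length) (by omega) x _ rfl
          rw [← hspec, Wt_cons, Wt_append]
          rw [Wt_cons] at h1
          rw [← add_assoc, h1, zero_add]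
          exact h2'


/-- The transformed graph `Ḡ` on the doubled vertex set `Fin n ⊕ Fin n`
(the left copy playing the role of `{1,…,n}` and the right copy of `{n+1,…,2n}`):
positive edges `{i,j}` of `G` stay, each negative edge `{i,j}` of `G` is replaced
by `{i, j+n}` and `{j, i+n}`, and the edges `{i, i+n}` are added. -/
def doubledGraph {n : ℕ} (G : SimpleGraph (Fin n)) (σ : Fin n → Fin n → ℤ) :
    SimpleGraph (Fin n ⊕ Fin n) :=
  SimpleGraph.fromRel (fun a b =>
    match a, b with
    | Sum.inl i, Sum.inl j => G.Adj i j ∧ σ i j = 1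
    | Sum.inl i, Sum.inr j => (G.Adj i j ∧ σ i j = -1) ∨ i = j
    | Sum.inr _, _ => False)

/-- If in every simple cycle of the signed graph `G` the number of negative edges is
congruent to the cycle length modulo 2, then the transformed graph `Ḡ` is
bipartite (2-colorable, i.e., contains no odd cycle). -/
theorem doubledGraph_bipartite (n : ℕ) (G : SimpleGraph (Fin n))
    (σ : Fin n → Fin n → ℤ)
    (hσsymm : ∀ i j, σ i j = σ j i)
    (hσval : ∀ i j, G.Adj i j → σ i j = 1 ∨ σ i j = -1)
    (hcycles : ∀ (u : Fin n) (w : G.Walk u u), w.IsCycle →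
      (w.edges.countP fun e => decide (Sym2.lift ⟨σ, hσsymm⟩ e = -1)) % 2
        = w.length % 2) :
    (doubledGraph G σ).Colorable 2 := by
  classical
  have hclosed : ∀ (u : Fin n) (w : G.Walk u u), Wt σ hσsymm w = 0 :=
    fun u w => Wt_closed σ hσsymm hcycles w.length u w rfl
  have hWtrev : ∀ {a b : Fin n} (p : G.Walk a b), Wt σ hσsymm p.reverse = Wt σ hσsymm p := by
    intro a b p
    rw [Wt, Wt, Walk.edges_reverse, List.map_reverse, List.sum_reverse]
  have hsame : ∀ {a b : Fin n} (p q : G.Walk a b), Wt σ hσsymm p = Wt σ hσsymm q := by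
    intro a b p q
    have h0 := hclosed a (p.append q.reverse)
    rw [Wt_append, hWtrev] at h0
    have h1 := congrArg (· + Wt σ hσsymm q) h0
    simp only [add_assoc, zero_add] at h1
    rwa [← two_mul, show (2 : ZMod 2) = 0 by decide, zero_mul, add_zero] at h1
  have hreach : ∀ v : Fin n, G.Reachable ((G.connectedComponentMk v).out) v :=
    fun v => SimpleGraph.ConnectedComponent.eq.mp (Quot.out_eq _)
  set f : Fin n → ZMod 2 := fun v => Wt σ hσsymm (hreach v).some with hf
  have hedge : ∀ i j (hij : G.Adj i j), f j = f i + ew σ hσsymm s(i, j) := by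
    intro i j hij
    have hcomp : G.connectedComponentMk i = G.connectedComponentMk j :=
      SimpleGraph.ConnectedComponent.sound hij.reachable
    have houteq : (G.connectedComponentMk i).out = (G.connectedComponentMk j).out :=
      congrArg _ hcomp
    have hq : f j = Wt σ hσsymm ((((hreach i).some).concat hij).copy houteq rfl) := hsame _ _
    rw [hq]
    rw [show Wt σ hσsymm ((((hreach i).some).concat hij).copy houteq rfl)
        = Wt σ hσsymm (((hreach i).some).concat hij) from by rw [Wt, Wt, Walk.edges_copy]]
    rw [Wt, Walk.edges_concat, List.concat_eq_append, List.map_append, List.sum_append,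
      List.map_singleton, List.sum_singleton]
    rfl
  have hpos : ∀ i j, G.Adj i j → σ i j = 1 → f j = f i + 1 := by
    intro i j hij hs
    rw [hedge i j hij, ew, if_neg (by simp [hs])]
  have hneg : ∀ i j, G.Adj i j → σ i j = -1 → f j = f i := by
    intro i j hij hs
    rw [hedge i j hij, ew, if_pos (by simp [hs]), add_zero]
  have hcons : ∀ x : ZMod 2, x ≠ x + 1 := by decide
  let c : (Fin n ⊕ Fin n) → ZMod 2 := fun a => match a with
    | Sum.inl i => f i
    | Sum.inr i => f i + 1
  have hvalid : ∀ {a b}, (doubledGraph G σ).Adj a b → c a ≠ c b := by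
    intro a b hab
    rw [doubledGraph, SimpleGraph.fromRel_adj] at hab
    obtain ⟨hne, hrel⟩ := hab
    rcases a with i | i <;> rcases b with j | j
    · show f i ≠ f j
      rcases hrel with ⟨hij, hs⟩ | ⟨hij, hs⟩
      · rw [hpos i j hij hs]; exact hcons (f i)
      · rw [hpos j i hij hs]; intro hh; exact hcons (f j) hh.symm
    · show f i ≠ f j + 1
      rcases hrel with (⟨hij, hs⟩ | rfl) | hfalse
      · rw [hneg i j hij hs]; exact hcons (f i)
      · exact hcons (f i)
      · exact absurd hfalse not_false
    · show f i + 1 ≠ f j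
      rcases hrel with hfalse | (⟨hij, hs⟩ | rfl)
      · exact absurd hfalse not_false
      · rw [hneg j i hij hs]; intro hh; exact hcons (f j) hh.symm
      · intro hh; exact hcons (f j) hh.symm
    · rcases hrel with hfalse | hfalse <;> exact absurd hfalse not_false
  have hcol : (doubledGraph G σ).Coloring (ZMod 2) := SimpleGraph.Coloring.mk c hvalid
  have := hcol.colorable
  simpa using this
end

section
/- Let Q^1, …, Q^m be real symmetric n×n matrices and b ∈ R^m. If there exists ȳ ∈ R^m with ȳ ≥ 0 componentwise such that Σ_{p=1}^m ȳ_p Q^p is positive definite, then the feasible set of (P), namely {X : X is a real symmetric positive semidefinite n×n matrix and trace(Q^p X) ≤ b_p for p = 1,…,m}, is a bounded set of matrices. -/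
open Matrix

private lemma psd_entry_le_trace {k : ℕ} {X : Matrix (Fin k) (Fin k) ℝ} (hX : X.PosSemidef)
    (i j : Fin k) : |X i j| ≤ X.trace := by
  have hd : ∀ l, 0 ≤ X l l := fun l => by simpa using hX.dotProduct_mulVec_nonneg (Pi.single l 1)
  have htr : ∀ l, X l l ≤ X.trace := by
    intro l
    rw [Matrix.trace]
    exact Finset.single_le_sum (fun l _ => hd l) (Finset.mem_univ l)
  have hsym : X j i = X i j := by
    have := hX.1
    rw [Matrix.IsHermitian] at this
    calc X j i = Xᴴ i j := by simp [Matrix.conjTranspose_apply]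
    _ = X i j := by rw [this]
  have h1 := hX.dotProduct_mulVec_nonneg (Pi.single i 1 - Pi.single j 1)
  have h2 := hX.dotProduct_mulVec_nonneg (Pi.single i 1 + Pi.single j 1)
  simp [Matrix.mulVec_sub, Matrix.mulVec_add, dotProduct_sub, dotProduct_add,
    sub_dotProduct, add_dotProduct, Matrix.mulVec_single,
    single_dotProduct, dotProduct_single] at h1 h2
  rw [abs_le]
  constructor <;> nlinarith [hd i, hd j, htr i, htr j]

private lemma pd_trace_mul_ge {k : ℕ} (hk : 0 < k) {A X : Matrix (Fin k) (Fin k) ℝ}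
    (hA : A.PosDef) (hX : X.PosSemidef) :
    haveI : Nonempty (Fin k) := ⟨⟨0, hk⟩⟩
    (Finset.univ.inf' Finset.univ_nonempty hA.1.eigenvalues) * X.trace ≤ (A * X).trace := by
  haveI : Nonempty (Fin k) := ⟨⟨0, hk⟩⟩
  set U : Matrix (Fin k) (Fin k) ℝ := (hA.1.eigenvectorUnitary : Matrix (Fin k) (Fin k) ℝ) with hU
  set d : Fin k → ℝ := hA.1.eigenvalues
  set ε : ℝ := Finset.univ.inf' Finset.univ_nonempty d with hε
  set Y : Matrix (Fin k) (Fin k) ℝ := star U * X * U with hY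
  have hYpsd : Y.PosSemidef := by
    have := hX.conjTranspose_mul_mul_same U
    exact this
  have hYd : ∀ l, 0 ≤ Y l l := fun l => by simpa using hYpsd.dotProduct_mulVec_nonneg (Pi.single l 1)
  have hUU : U * star U = 1 := by
    exact Matrix.mem_unitaryGroup_iff.mp hA.1.eigenvectorUnitary.2
  have htrY : Y.trace = X.trace := by
    rw [hY, Matrix.trace_mul_cycle, hUU, one_mul]
  have hAX : (A * X).trace = (diagonal d * Y).trace := by
    conv_lhs => rw [hA.1.spectral_theorem]
    show ((U * diagonal d * star U) * X).trace = _
    rw [hY, Matrix.trace_mul_cycle (U * diagonal d) (star U) X,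
        Matrix.trace_mul_cycle X (U * diagonal d) (star U),
        Matrix.trace_mul_comm (diagonal d) (star U * X * U)]
    simp [mul_assoc]
  rw [hAX, ← htrY]
  have : (diagonal d * Y).trace = ∑ l, d l * Y l l := by
    simp [Matrix.trace, Matrix.diag, Matrix.diagonal_mul]
  rw [this, Matrix.trace, Finset.mul_sum]
  apply Finset.sum_le_sum
  intro l _
  exact mul_le_mul_of_nonneg_right (Finset.inf'_le _ (Finset.mem_univ l)) (hYd l)

/-- If `ȳ ≥ 0` satisfies `Σ_p ȳ_p Q^p ≻ 0`, then the feasible set of the primal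
SDP (P) is bounded. -/
theorem primal_feasible_bounded (n m : ℕ)
    (Q : Fin m → Matrix (Fin n) (Fin n) ℝ) (b : Fin m → ℝ)
    (hQ : ∀ p, (Q p).IsSymm)
    (ybar : Fin m → ℝ) (hybar : ∀ p, 0 ≤ ybar p)
    (hpd : (∑ p, ybar p • Q p).PosDef) :
    ∃ C : ℝ, ∀ X : Matrix (Fin n) (Fin n) ℝ,
      X.PosSemidef → (∀ p, (Q p * X).trace ≤ b p) → ∀ i j, |X i j| ≤ C := by
  rcases Nat.eq_zero_or_pos n with hn | hn
  · subst hn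
    exact ⟨0, fun X _ _ i j => i.elim0⟩
  haveI : Nonempty (Fin n) := ⟨⟨0, hn⟩⟩
  set A : Matrix (Fin n) (Fin n) ℝ := ∑ p, ybar p • Q p with hA
  set ε : ℝ := Finset.univ.inf' Finset.univ_nonempty hpd.1.eigenvalues with hε
  have hε0 : 0 < ε := by
    rw [hε, Finset.lt_inf'_iff]
    intro l _
    exact hpd.eigenvalues_pos l
  set B : ℝ := ∑ p, ybar p * b p with hB
  refine ⟨max 0 (B / ε), fun X hX hfeas i j => ?_⟩
  have htr1 : (A * X).trace ≤ B := by
    rw [hA, Matrix.sum_mul]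
    rw [Matrix.trace_sum]
    apply Finset.sum_le_sum
    intro p _
    rw [smul_mul_assoc, Matrix.trace_smul, smul_eq_mul]
    exact mul_le_mul_of_nonneg_left (hfeas p) (hybar p)
  have hkey := pd_trace_mul_ge hn hpd hX
  have htrX : X.trace ≤ B / ε := by
    rw [le_div_iff₀ hε0]
    calc X.trace * ε = ε * X.trace := by ring
    _ ≤ (A * X).trace := hkey
    _ ≤ B := htr1
  calc |X i j| ≤ X.trace := psd_entry_le_trace hX i j
  _ ≤ B / ε := htrX
  _ ≤ max 0 (B / ε) := le_max_right _ _
end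

section
/- Let X be feasible for (P) and y be feasible for (D), and suppose their objective values coincide: trace(Q^0 X) = −b·y. Then complementary slackness holds: X · S(y) = O (the zero n×n matrix). -/
open Matrix
open scoped MatrixOrder

lemma trace_self_mul_conjTranspose_nonneg {n : ℕ} (M : Matrix (Fin n) (Fin n) ℝ) :
    0 ≤ (M * Mᴴ).trace := by
  rw [Matrix.trace]
  apply Finset.sum_nonneg
  intro i _
  simp only [Matrix.diag_apply, Matrix.mul_apply, Matrix.conjTranspose_apply, star_trivial]
  exact Finset.sum_nonneg fun j _ => mul_self_nonneg _

lemma eq_zero_of_trace_self_mul_conjTranspose {n : ℕ} (M : Matrix (Fin n) (Fin n) ℝ)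
    (h : (M * Mᴴ).trace = 0) : M = 0 := by
  ext i j
  have hsum : ∑ i, ∑ j, M i j * M i j = 0 := by
    rw [← h, Matrix.trace]
    simp [Matrix.mul_apply, Matrix.diag_apply]
  have h1 : ∀ i ∈ Finset.univ, (0:ℝ) ≤ ∑ j, M i j * M i j :=
    fun i _ => Finset.sum_nonneg fun j _ => mul_self_nonneg _
  have h2 := (Finset.sum_eq_zero_iff_of_nonneg h1).mp hsum i (Finset.mem_univ i)
  have h3 := (Finset.sum_eq_zero_iff_of_nonneg
    (fun j _ => mul_self_nonneg (M i j))).mp h2 j (Finset.mem_univ j)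
  simpa [mul_self_eq_zero] using h3


/-- Complementary slackness: if `X` is feasible for (P), `y` is feasible for (D), and
their objective values coincide, then `X · S(y) = O`. -/
theorem complementary_slackness (n m : ℕ)
    (Q0 : Matrix (Fin n) (Fin n) ℝ) (Q : Fin m → Matrix (Fin n) (Fin n) ℝ) (b : Fin m → ℝ)
    (hQ0 : Q0.IsSymm) (hQ : ∀ p, (Q p).IsSymm)
    (X : Matrix (Fin n) (Fin n) ℝ) (hXpsd : X.PosSemidef)
    (hXfeas : ∀ p, (Q p * X).trace ≤ b p)
    (y : Fin m → ℝ) (hy : ∀ p, 0 ≤ y p)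
    (hS : (Q0 + ∑ p, y p • Q p).PosSemidef)
    (heq : (Q0 * X).trace = -(b ⬝ᵥ y)) :
    X * (Q0 + ∑ p, y p • Q p) = 0 := by
  set S := Q0 + ∑ p, y p • Q p with hSdef
  have hR := (CFC.sqrt_nonneg S).posSemidef
  have hT := (CFC.sqrt_nonneg X).posSemidef
  set R := CFC.sqrt S with hRdef
  set T := CFC.sqrt X with hTdef
  have hRR : R * R = S := CFC.sqrt_mul_sqrt_self S hS.nonneg
  have hTT : T * T = X := CFC.sqrt_mul_sqrt_self X hXpsd.nonneg
  have hct : (R * T)ᴴ = T * R := by rw [conjTranspose_mul, hR.1.eq, hT.1.eq]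
  have htr : ((R * T) * (R * T)ᴴ).trace = (S * X).trace := by
    rw [hct]
    calc ((R * T) * (T * R)).trace = (R * ((T * T) * R)).trace := by
            rw [Matrix.mul_assoc, Matrix.mul_assoc]
      _ = (((T * T) * R) * R).trace := trace_mul_comm _ _
      _ = ((T * T) * (R * R)).trace := by rw [Matrix.mul_assoc]
      _ = (S * X).trace := by rw [hRR, hTT, trace_mul_comm]
  have h1 : (S * X).trace = (Q0 * X).trace + ∑ p, y p * (Q p * X).trace := by
    rw [hSdef, Matrix.add_mul, trace_add, Finset.sum_mul, trace_sum]
    simp [Matrix.smul_mul, trace_smul]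
  have h2 : ∑ p, y p * (Q p * X).trace ≤ ∑ p, y p * b p :=
    Finset.sum_le_sum fun p _ => mul_le_mul_of_nonneg_left (hXfeas p) (hy p)
  have h3 : b ⬝ᵥ y = ∑ p, y p * b p := by
    simp [dotProduct, mul_comm]
  have hle : (S * X).trace ≤ 0 := by
    rw [h1, heq, h3]
    linarith
  have hge : 0 ≤ (S * X).trace := htr ▸ trace_self_mul_conjTranspose_nonneg (R * T)
  have hM0 : R * T = 0 := eq_zero_of_trace_self_mul_conjTranspose _
    (by rw [htr]; exact le_antisymm hle hge)
  have hTR : T * R = 0 := by rw [← hct, hM0]; simp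
  calc X * S = T * T * (R * R) := by rw [hRR, hTT]
    _ = T * (T * R) * R := by rw [Matrix.mul_assoc, Matrix.mul_assoc, Matrix.mul_assoc]
    _ = 0 := by rw [hTR]; simp
end

section
/- Let Q be a real symmetric n×n matrix and δ > 0. Define the real symmetric n×n matrices D, N_+, N_− by: D is diagonal with D_{ii} = Q_{ii} + 2δ; for i ≠ j, (N_+)_{ij} = Q_{ij}/2 if Q_{ij} > 0 and (N_+)_{ij} = 0 otherwise, with (N_+)_{ii} = 0; for i ≠ j, (N_−)_{ij} = −Q_{ij}/2 if Q_{ij} < 0 and (N_−)_{ij} = 0 otherwise, with (N_−)_{ii} = δ. Then Q = D + 2N_+ − 2N_−, the matrices N_+ and N_− have all entries nonnegative, and for every x ∈ R^n, setting z = −x, the quadratic form identity xᵀQx = [x; z]ᵀ [[D + 2N_+, N_−]; [N_−, O]] [x; z] holds, where [[D + 2N_+, N_−]; [N_−, O]] is the symmetric 2n×2n block matrix with upper-left block D + 2N_+, upper-right and lower-left blocks N_−, and lower-right block the zero matrix. -/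
open Matrix

/-- Decomposition `Q = D + 2N₊ − 2N₋` of a symmetric matrix into a diagonal part and
nonnegative off-diagonal parts, together with the quadratic-form identity
`xᵀQx = [x; z]ᵀ [[D + 2N₊, N₋]; [N₋, O]] [x; z]` for `z = −x`. -/
theorem bipartite_decomposition (n : ℕ) (Q : Matrix (Fin n) (Fin n) ℝ)
    (hQ : Q.IsSymm) (δ : ℝ) (hδ : 0 < δ)
    (D Np Nm : Matrix (Fin n) (Fin n) ℝ)
    (hD : ∀ i j, D i j = if i = j then Q i i + 2 * δ else 0)
    (hNp : ∀ i j, Np i j = if i ≠ j ∧ 0 < Q i j then Q i j / 2 else 0)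
    (hNm : ∀ i j, Nm i j = if i = j then δ else if Q i j < 0 then -Q i j / 2 else 0) :
    Q = D + 2 • Np - 2 • Nm ∧
    (∀ i j, 0 ≤ Np i j) ∧ (∀ i j, 0 ≤ Nm i j) ∧
    ∀ x : Fin n → ℝ,
      Sum.elim x (-x) ⬝ᵥ
          (Matrix.fromBlocks (D + 2 • Np) Nm Nm (0 : Matrix (Fin n) (Fin n) ℝ)).mulVec
            (Sum.elim x (-x))
        = x ⬝ᵥ Q.mulVec x := by
  have hEq : Q = D + 2 • Np - 2 • Nm := by
    ext i j
    simp only [Matrix.sub_apply, Matrix.add_apply, Matrix.smul_apply, hD, hNp, hNm,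
      smul_eq_mul]
    rcases eq_or_ne i j with h | h
    · subst h; simp
    · simp only [if_neg h, ne_eq, h, not_false_iff, true_and]
      split_ifs <;> first
        | contradiction
        | (simp only [nsmul_eq_mul, Nat.cast_ofNat, smul_eq_mul]; linarith)
  refine ⟨hEq, ?_, ?_, ?_⟩
  · intro i j; rw [hNp]; split_ifs with h
    · linarith [h.2]
    · exact le_refl 0
  · intro i j; rw [hNm]; split_ifs <;> linarith
  · intro x
    have h2 : ∀ M : Matrix (Fin n) (Fin n) ℝ, (2 : ℕ) • M = (2 : ℝ) • M := fun M => by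
      ext i j; simp
    rw [Matrix.fromBlocks_mulVec, sumElim_dotProduct_sumElim, hEq]
    simp only [h2, Matrix.mulVec_add, Matrix.mulVec_neg, Matrix.sub_mulVec,
      Matrix.add_mulVec, Matrix.smul_mulVec, Matrix.zero_mulVec, add_zero,
      dotProduct_add, dotProduct_neg, neg_dotProduct, dotProduct_smul, dotProduct_sub,
      neg_neg, smul_eq_mul, Sum.elim_comp_inl, Sum.elim_comp_inr, dotProduct_zero]
    ring
end
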